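/- arXiv:2406.18477 — 5 statements merged into one kernel-verified Lean document; each statement's English description precedes it below -/
import Mathlib

section
/- Let r be a relational morphism from a finite semigroup S to a finite semigroup T, and let N be a subgroup of S such that N ⊆ t r⁻¹ for some t ∈ T. Then there exists an idempotent f ∈ T with N ⊆ f r⁻¹. Consequently, if 𝒱 is a class of finite semigroups and N is a 𝒱-pointlike subgroup of S, then for every T ∈ 𝒱 and every relational morphism r from S to T there is an idempotent f ∈ T with N ⊆ f r⁻¹. -/
open Pointwise

/-- A relational morphism between semigroups: a set-valued map with nonempty
values such that `r s₁ * r s₂ ⊆ r (s₁ * s₂)`. -/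
structure RelMorph (S T : Type) [Semigroup S] [Semigroup T] where
  toFun : S → Set T
  nonempty : ∀ s : S, (toFun s).Nonempty
  mul_subset : ∀ s₁ s₂ : S, toFun s₁ * toFun s₂ ⊆ toFun (s₁ * s₂)

/-- `t r⁻¹ = {s ∈ S : t ∈ r s}`. -/
def RelMorph.preim {S T : Type} [Semigroup S] [Semigroup T] (r : RelMorph S T) (t : T) :
    Set S := {s : S | t ∈ r.toFun s}

/-- `X ⊆ S` is `𝒱`-pointlike: for every finite semigroup `T` in `𝒱` and every
relational morphism `r : S → T` there is `t ∈ T` with `X ⊆ t r⁻¹`. -/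
def Pointlike (V : ∀ (T : Type) [Semigroup T] [Finite T], Prop)
    (S : Type) [Semigroup S] [Finite S] (X : Set S) : Prop :=
  ∀ (T : Type) [Semigroup T] [Finite T], V T → ∀ r : RelMorph S T, ∃ t : T, X ⊆ r.preim t

/-- `N` is a subgroup of the semigroup `S`: a subsemigroup which is a group
under the induced multiplication. -/
def IsSubgroupOf (S : Type) [Semigroup S] (N : Set S) : Prop :=
  (∀ a ∈ N, ∀ b ∈ N, a * b ∈ N) ∧
  ∃ e ∈ N, (∀ a ∈ N, e * a = a ∧ a * e = a) ∧ ∀ a ∈ N, ∃ b ∈ N, a * b = e ∧ b * a = e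

/-- `sppow t n = t^(n+1)` in a semigroup. -/
def sppow {T : Type} [Semigroup T] (t : T) : ℕ → T
  | 0 => t
  | n + 1 => sppow t n * t

lemma sppow_add {T : Type} [Semigroup T] (t : T) (m n : ℕ) :
    sppow t (m + n + 1) = sppow t m * sppow t n := by
  induction n with
  | zero => rfl
  | succ n ih =>
      show sppow t (m + n + 1) * t = sppow t m * (sppow t n * t)
      rw [ih, mul_assoc]

lemma sppow_shift {T : Type} [Semigroup T] (t : T) (m c : ℕ)
    (h : sppow t m = sppow t (m + c)) : ∀ k, m ≤ k → sppow t k = sppow t (k + c) := by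
  intro k hk
  induction k with
  | zero =>
      have hm : m = 0 := Nat.le_zero.mp hk
      rw [hm] at h; simpa using h
  | succ k ih =>
      rcases Nat.lt_or_ge m (k + 1) with hm | hm
      · have hk' : m ≤ k := Nat.lt_succ_iff.mp hm
        have he : k + 1 + c = (k + c) + 1 := by omega
        rw [he]
        show sppow t k * t = sppow t (k + c) * t
        rw [ih hk']
      · have : m = k + 1 := le_antisymm hk hm
        exact this ▸ h

lemma sppow_shift_mul {T : Type} [Semigroup T] (t : T) (m c : ℕ)
    (h : sppow t m = sppow t (m + c)) : ∀ j k, m ≤ k → sppow t k = sppow t (k + j * c) := by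
  intro j
  induction j with
  | zero => intro k _; simp
  | succ j ih =>
      intro k hk
      have h1 := ih k hk
      have h2 := sppow_shift t m c h (k + j * c) (le_trans hk (Nat.le_add_right _ _))
      rw [h1, h2, Nat.succ_mul, ← Nat.add_assoc]

lemma exists_idem_sppow {T : Type} [Semigroup T] [Finite T] (t : T) :
    ∃ n : ℕ, sppow t n * sppow t n = sppow t n := by
  obtain ⟨m, n, hmn, he⟩ := Finite.exists_ne_map_eq_of_infinite (sppow t)
  wlog hlt : m < n generalizing m n
  · exact this n m (Ne.symm hmn) he.symm (by omega)
  obtain ⟨c, hc1, rfl⟩ : ∃ c, 1 ≤ c ∧ n = m + c := ⟨n - m, by omega, by omega⟩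
  have h : sppow t m = sppow t (m + c) := he
  refine ⟨(m + 1) * c - 1, ?_⟩
  set E := (m + 1) * c - 1 with hE
  have hmE : m ≤ E := by
    have : m + 1 ≤ (m + 1) * c := Nat.le_mul_of_pos_right _ hc1
    omega
  have key : sppow t E = sppow t (E + (m + 1) * c) :=
    sppow_shift_mul t m c h (m + 1) E hmE
  have hpa : sppow t (E + E + 1) = sppow t E * sppow t E := sppow_add t E E
  rw [← hpa]
  have hEE : E + E + 1 = E + (m + 1) * c := by
    have : m + 1 ≤ (m + 1) * c := Nat.le_mul_of_pos_right _ hc1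
    omega
  rw [hEE, ← key]

/-- a subgroup covered by some element of `T` under a relational morphism
is covered by an idempotent of `T`; consequently a `𝒱`-pointlike subgroup is always
covered by an idempotent. -/
theorem subgroup_covered_by_idempotent
    (S : Type) [Semigroup S] [Finite S] (N : Set S) (hN : IsSubgroupOf S N) :
    (∀ (T : Type) [Semigroup T] [Finite T] (r : RelMorph S T) (t : T),
        N ⊆ r.preim t → ∃ f : T, f * f = f ∧ N ⊆ r.preim f) ∧
    (∀ V : ∀ (T : Type) [Semigroup T] [Finite T], Prop,
      Pointlike V S N →
        ∀ (T : Type) [Semigroup T] [Finite T], V T → ∀ r : RelMorph S T,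
          ∃ f : T, f * f = f ∧ N ⊆ r.preim f) := by
  obtain ⟨hmul, e, heN, hid, hinv⟩ := hN
  have main : ∀ (T : Type) [Semigroup T] [Finite T] (r : RelMorph S T) (t : T),
      N ⊆ r.preim t → ∃ f : T, f * f = f ∧ N ⊆ r.preim f := by
    intro T _ _ r t ht
    have hpow : ∀ n : ℕ, N ⊆ r.preim (sppow t n) := by
      intro n
      induction n with
      | zero => exact ht
      | succ n ih =>
          intro s hs
          have h1 : sppow t n ∈ r.toFun s := ih hs
          have h2 : t ∈ r.toFun e := ht heN
          have h3 : sppow t n * t ∈ r.toFun s * r.toFun e :=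
            Set.mul_mem_mul h1 h2
          have h4 := r.mul_subset s e h3
          rw [(hid s hs).2] at h4
          exact h4
    obtain ⟨n, hn⟩ := exists_idem_sppow t
    exact ⟨sppow t n, hn, hpow n⟩
  refine ⟨main, ?_⟩
  intro V hV T _ _ hTV r
  obtain ⟨t, ht⟩ := hV T hTV r
  exact main T r t ht
end

section
/- Let S be a finite semigroup, e an idempotent of S, G_e the maximal subgroup of S at e, and 𝒱 any class of finite semigroups. Then there is a subgroup M of G_e such that: M is 𝒱-pointlike, M is normal in G_e, M contains every 𝒱-pointlike subgroup of G_e, and M equals the product of all normal subgroups of G_e that are 𝒱-pointlike. In particular, G_e has a unique maximal 𝒱-pointlike subgroup, and it is normal in G_e. -/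
open Pointwise

/-- The maximal subgroup `G_e` of `S` at the idempotent `e`: elements `x` with
`xe = ex = x` possessing an inverse relative to `e`. -/
def maxSubgroupAt (S : Type) [Semigroup S] (e : S) : Set S :=
  {x : S | x * e = x ∧ e * x = x ∧ ∃ y : S, y * e = y ∧ e * y = y ∧ x * y = e ∧ y * x = e}

/-- `N ⊆ G_e` is normal in `G_e`: closed under conjugation by elements of `G_e`. -/
def IsNormalInMaxSubgroup (S : Type) [Semigroup S] (e : S) (N : Set S) : Prop :=
  ∀ g ∈ maxSubgroupAt S e, ∀ y ∈ maxSubgroupAt S e,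
    g * y = e → y * g = e → ∀ m ∈ N, g * m * y ∈ N

section MaxPt

variable {S : Type} [Semigroup S] [Finite S]
set_option linter.unusedSectionVars false
variable (V : ∀ (T : Type) [Semigroup T] [Finite T], Prop)
variable {e : S}

lemma e_mem_G (he : e * e = e) : e ∈ maxSubgroupAt S e := ⟨he, he, e, he, he, he, he⟩

lemma G_mul {a b : S} (ha : a ∈ maxSubgroupAt S e) (hb : b ∈ maxSubgroupAt S e) :
    a * b ∈ maxSubgroupAt S e := by
  obtain ⟨ha1, ha2, a', ha'1, ha'2, ha'3, ha'4⟩ := ha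
  obtain ⟨hb1, hb2, b', hb'1, hb'2, hb'3, hb'4⟩ := hb
  refine ⟨by rw [mul_assoc, hb1], by rw [← mul_assoc, ha2], b' * a', by rw [mul_assoc, ha'1],
    by rw [← mul_assoc, hb'2], ?_, ?_⟩
  · rw [mul_assoc, ← mul_assoc b b' a', hb'3, ha'2, ha'3]
  · rw [mul_assoc, ← mul_assoc a' a b, ha'4, hb2, hb'4]

lemma G_inv {a : S} (ha : a ∈ maxSubgroupAt S e) :
    ∃ b ∈ maxSubgroupAt S e, a * b = e ∧ b * a = e := by
  obtain ⟨ha1, ha2, y, hy1, hy2, hy3, hy4⟩ := ha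
  exact ⟨y, ⟨hy1, hy2, a, ha1, ha2, hy4, hy3⟩, hy3, hy4⟩

lemma subgroup_e_mem {N : Set S} (hN : IsSubgroupOf S N) (hNG : N ⊆ maxSubgroupAt S e) :
    e ∈ N ∧ ∀ a ∈ N, ∃ b ∈ N, a * b = e ∧ b * a = e := by
  obtain ⟨hcl, f, hfN, hid, hinv⟩ := hN
  have hff : f * f = f := (hid f hfN).1
  obtain ⟨y, hyG, hfy, hyf⟩ := G_inv (hNG hfN)
  have hfe : e = f := by
    have h1 : f * y = (f * f) * y := by rw [hff]
    rw [mul_assoc, hfy, (hNG hfN).1] at h1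
    exact h1
  constructor
  · exact hfe ▸ hfN
  · intro a ha
    obtain ⟨b, hb, h1, h2⟩ := hinv a ha
    exact ⟨b, hb, hfe ▸ h1, hfe ▸ h2⟩

lemma pointlike_mono {X Y : Set S} (h : X ⊆ Y) (hY : Pointlike V S Y) : Pointlike V S X :=
  fun T _ _ hT r => (hY T hT r).imp fun _ ht s hs => ht (h hs)

lemma pointlike_singleton (a : S) : Pointlike V S {a} := by
  intro T _ _ _ r
  obtain ⟨t, ht⟩ := r.nonempty a
  refine ⟨t, fun s hs => ?_⟩
  rw [Set.mem_singleton_iff] at hs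
  subst hs
  exact ht

lemma pointlike_mul {X Y : Set S} (hX : Pointlike V S X) (hY : Pointlike V S Y) :
    Pointlike V S (X * Y) := by
  intro T _ _ hT r
  obtain ⟨t1, h1⟩ := hX T hT r
  obtain ⟨t2, h2⟩ := hY T hT r
  refine ⟨t1 * t2, fun s hs => ?_⟩
  obtain ⟨x, hx, y, hy, rfl⟩ := Set.mem_mul.mp hs
  exact r.mul_subset x y (Set.mul_mem_mul (h1 hx) (h2 hy))

end MaxPt

def pwE {S : Type} [Semigroup S] (e : S) (A : Set S) : ℕ → Set S :=
  fun n => Nat.rec {e} (fun _ p => p * A) n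

section MaxPt2

variable {S : Type} [Semigroup S] [Finite S]
set_option linter.unusedSectionVars false
variable (V : ∀ (T : Type) [Semigroup T] [Finite T], Prop)
variable {e : S}

lemma pwE_zero (A : Set S) : pwE e A 0 = {e} := rfl

lemma pwE_succ (A : Set S) (n : ℕ) : pwE e A (n + 1) = pwE e A n * A := rfl

lemma pwE_subset_G (he : e * e = e) {A : Set S} (hAG : A ⊆ maxSubgroupAt S e) :
    ∀ n, pwE e A n ⊆ maxSubgroupAt S e := by
  intro n
  induction n with
  | zero => exact Set.singleton_subset_iff.mpr (e_mem_G he)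
  | succ n ih =>
    intro s hs
    obtain ⟨x, hx, y, hy, rfl⟩ := Set.mem_mul.mp hs
    exact G_mul (ih hx) (hAG hy)

lemma pwE_e_mem (he : e * e = e) {A : Set S} (heA : e ∈ A) : ∀ n, e ∈ pwE e A n := by
  intro n
  induction n with
  | zero => rfl
  | succ n ih =>
    have h := Set.mul_mem_mul ih heA
    rwa [he] at h

lemma pwE_succ_mono (he : e * e = e) {A : Set S} (hAG : A ⊆ maxSubgroupAt S e) (heA : e ∈ A)
    (n : ℕ) : pwE e A n ⊆ pwE e A (n + 1) := by
  intro s hs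
  have h := Set.mul_mem_mul hs heA
  rwa [(pwE_subset_G he hAG n hs).1] at h

lemma pwE_le_mono (he : e * e = e) {A : Set S} (hAG : A ⊆ maxSubgroupAt S e) (heA : e ∈ A)
    {a b : ℕ} (h : a ≤ b) : pwE e A a ⊆ pwE e A b := by
  induction b with
  | zero => rw [Nat.le_zero.mp h]
  | succ b ih =>
    rcases Nat.lt_or_ge a (b+1) with h' | h'
    · exact (ih (Nat.lt_succ_iff.mp h')).trans (pwE_succ_mono he hAG heA b)
    · rw [Nat.le_antisymm h h']

lemma pwE_mul_subset (he : e * e = e) {A : Set S} (hAG : A ⊆ maxSubgroupAt S e) :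
    ∀ a b, pwE e A a * pwE e A b ⊆ pwE e A (a + b) := by
  intro a b
  induction b with
  | zero =>
    intro s hs
    obtain ⟨x, hx, y, hy, rfl⟩ := Set.mem_mul.mp hs
    rw [pwE_zero, Set.mem_singleton_iff] at hy
    subst hy
    rw [(pwE_subset_G he hAG a hx).1]
    exact hx
  | succ b ih =>
    intro s hs
    obtain ⟨x, hx, z, hz, rfl⟩ := Set.mem_mul.mp hs
    obtain ⟨u, hu, v, hv, rfl⟩ := Set.mem_mul.mp hz
    rw [← mul_assoc]
    exact Set.mul_mem_mul (ih (Set.mul_mem_mul hx hu)) hv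

lemma pwE_pointlike (he : e * e = e) {A : Set S} (hA : Pointlike V S A) :
    ∀ n, Pointlike V S (pwE e A n) := by
  intro n
  induction n with
  | zero => exact pointlike_singleton V e
  | succ n ih => exact pointlike_mul V ih hA

lemma pwE_stab (he : e * e = e) {A : Set S} (hAG : A ⊆ maxSubgroupAt S e) (heA : e ∈ A) :
    ∃ n₀, ∀ m, n₀ ≤ m → pwE e A m = pwE e A n₀ := by
  obtain ⟨i, j, hij, hfeq⟩ := Finite.exists_ne_map_eq_of_infinite (pwE e A)
  have key : ∀ i j : ℕ, i < j → pwE e A i = pwE e A j →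
      ∀ m, i ≤ m → pwE e A m = pwE e A i := by
    intro i j hlt heq
    have hstep : pwE e A (i + 1) = pwE e A i := by
      apply Set.Subset.antisymm
      · rw [heq]
        exact pwE_le_mono he hAG heA hlt
      · exact pwE_succ_mono he hAG heA i
    intro m hm
    induction m with
    | zero => rw [Nat.le_zero.mp hm]
    | succ m ih =>
      rcases Nat.lt_or_ge i (m+1) with h' | h'
      · have him : i ≤ m := Nat.lt_succ_iff.mp h'
        rw [pwE_succ, ih him, ← pwE_succ, hstep]
      · rw [Nat.le_antisymm hm h']
  rcases Nat.lt_or_ge i j with h | h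
  · exact ⟨i, key i j h hfeq⟩
  · have h' : j < i := Nat.lt_of_le_of_ne h (Ne.symm hij)
    exact ⟨j, key j i h' hfeq.symm⟩

lemma closed_subgroup (he : e * e = e) {K : Set S} (hKG : K ⊆ maxSubgroupAt S e)
    (heK : e ∈ K) (hcl : ∀ a ∈ K, ∀ b ∈ K, a * b ∈ K) : IsSubgroupOf S K := by
  refine ⟨hcl, e, heK, fun a ha => ⟨(hKG ha).2.1, (hKG ha).1⟩, ?_⟩
  intro x hx
  set f : ℕ → S := fun n => Nat.rec x (fun _ p => p * x) n with hf
  have hfs : ∀ n, f (n + 1) = f n * x := fun n => rfl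
  have hfK : ∀ n, f n ∈ K := by
    intro n
    induction n with
    | zero => exact hx
    | succ n ih => exact hcl _ ih _ hx
  obtain ⟨x', hx'G, hxx', hx'x⟩ := G_inv (hKG hx)
  have hcancel : ∀ n, f (n + 1) * x' = f n := by
    intro n
    rw [hfs, mul_assoc, hxx', (hKG (hfK n)).1]
  have hcomm : ∀ n, x * f n = f n * x := by
    intro n
    induction n with
    | zero => rfl
    | succ n ih => rw [hfs, ← mul_assoc, ih]
  have hdown : ∀ k a b, f (a + k) = f (b + k) → f a = f b := by
    intro k
    induction k with
    | zero => intro a b h; exact h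
    | succ k ih =>
      intro a b h
      apply ih
      have h2 := congrArg (· * x') h
      rwa [show a + (k+1) = (a + k) + 1 from rfl, show b + (k+1) = (b + k) + 1 from rfl,
        hcancel, hcancel] at h2
  have key : ∀ i j, i < j → f i = f j → ∃ b ∈ K, x * b = e ∧ b * x = e := by
    intro i j hlt hfeq
    obtain ⟨d, hd⟩ := Nat.exists_eq_add_of_lt hlt
    -- j = i + d + 1
    have h0 : f 0 = f (d + 1) := by
      refine hdown i 0 (d + 1) ?_
      rw [Nat.zero_add, show d + 1 + i = i + d + 1 from by omega, ← hd]
      exact hfeq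
    -- x = f d * x
    have hx1 : x = f d * x := by rw [← hfs d]; exact h0
    have hfd : f d = e := by
      have h2 := congrArg (· * x') hx1
      rw [hxx', mul_assoc, hxx', (hKG (hfK d)).1] at h2
      exact h2.symm
    cases d with
    | zero => exact ⟨e, heK, by rw [show f 0 = x from rfl] at hfd; rw [hfd, he], by
        rw [show f 0 = x from rfl] at hfd; rw [hfd, he]⟩
    | succ d' =>
      refine ⟨f d', hfK d', ?_, ?_⟩
      · rw [hcomm, ← hfs, hfd]
      · rw [← hfs, hfd]
  obtain ⟨i, j, hij, hfeq⟩ := Finite.exists_ne_map_eq_of_infinite f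
  rcases Nat.lt_or_ge i j with h | h
  · exact key i j h hfeq
  · exact key j i (Nat.lt_of_le_of_ne h (Ne.symm hij)) hfeq.symm

end MaxPt2

section MaxPt3

variable {S : Type} [Semigroup S] [Finite S]
set_option linter.unusedSectionVars false
variable (V : ∀ (T : Type) [Semigroup T] [Finite T], Prop)
variable {e : S}

lemma subset_mul_left (he : e * e = e) {A B : Set S} (hAG : A ⊆ maxSubgroupAt S e)
    (heB : e ∈ B) : A ⊆ A * B := by
  intro a ha
  have h := Set.mul_mem_mul ha heB
  rwa [(hAG ha).1] at h

lemma subset_mul_right (he : e * e = e) {A B : Set S} (hBG : B ⊆ maxSubgroupAt S e)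
    (heA : e ∈ A) : B ⊆ A * B := by
  intro b hb
  have h := Set.mul_mem_mul heA hb
  rwa [(hBG hb).2.1] at h

lemma mul_subset_G (he : e * e = e) {A B : Set S} (hAG : A ⊆ maxSubgroupAt S e)
    (hBG : B ⊆ maxSubgroupAt S e) : A * B ⊆ maxSubgroupAt S e := by
  intro s hs
  obtain ⟨x, hx, y, hy, rfl⟩ := Set.mem_mul.mp hs
  exact G_mul (hAG hx) (hBG hy)

lemma e_mem_mul (he : e * e = e) {A B : Set S} (heA : e ∈ A) (heB : e ∈ B) : e ∈ A * B := by
  have h := Set.mul_mem_mul heA heB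
  rwa [he] at h

lemma foldl_weak (he : e * e = e) (l : List (Set S)) :
    ∀ A : Set S, A ⊆ maxSubgroupAt S e → e ∈ A → Pointlike V S A →
    (∀ N ∈ l, N ⊆ maxSubgroupAt S e ∧ e ∈ N ∧ Pointlike V S N) →
    (l.foldl (· * ·) A ⊆ maxSubgroupAt S e ∧ e ∈ l.foldl (· * ·) A ∧
     Pointlike V S (l.foldl (· * ·) A) ∧ A ⊆ l.foldl (· * ·) A ∧
     ∀ N ∈ l, N ⊆ l.foldl (· * ·) A) := by
  induction l with
  | nil =>
    intro A h1 h2 h3 _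
    exact ⟨h1, h2, h3, subset_rfl, by simp⟩
  | cons N l ih =>
    intro A hAG heA hAp hl
    obtain ⟨hNG, heN, hNp⟩ := hl N List.mem_cons_self
    have h := ih (A * N) (mul_subset_G he hAG hNG) (e_mem_mul he heA heN)
      (pointlike_mul V hAp hNp) (fun N' hN' => hl N' (List.mem_cons_of_mem N hN'))
    have hfold : (N :: l).foldl (· * ·) A = l.foldl (· * ·) (A * N) := rfl
    rw [hfold]
    refine ⟨h.1, h.2.1, h.2.2.1, (subset_mul_left he hAG heN).trans h.2.2.2.1, ?_⟩
    intro N' hN'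
    rcases List.mem_cons.mp hN' with h' | h'
    · subst h'
      exact (subset_mul_right he hNG heA).trans h.2.2.2.1
    · exact h.2.2.2.2 N' h'

lemma conj_mul_split (he : e * e = e) {g y a b : S} (haG : a ∈ maxSubgroupAt S e)
    (hyg : y * g = e) (hbG : b ∈ maxSubgroupAt S e) :
    g * (a * b) * y = (g * a * y) * (g * b * y) := by
  have h1 : y * (g * b * y) = b * y := by
    rw [← mul_assoc, ← mul_assoc, hyg, hbG.2.1]
  calc g * (a * b) * y = g * (a * (b * y)) := by rw [mul_assoc, mul_assoc]
    _ = g * (a * (y * (g * b * y))) := by rw [h1]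
    _ = (g * a * y) * (g * b * y) := by rw [← mul_assoc, ← mul_assoc, mul_assoc (g*a) y]

lemma foldl_strong (he : e * e = e) (l : List (Set S))
    (hl : ∀ N ∈ l, IsSubgroupOf S N ∧ N ⊆ maxSubgroupAt S e ∧ Pointlike V S N ∧
        IsNormalInMaxSubgroup S e N) :
    ∀ A : Set S, A ⊆ maxSubgroupAt S e → e ∈ A → Pointlike V S A →
      (∀ a ∈ A, ∀ b ∈ A, a * b ∈ A) → IsNormalInMaxSubgroup S e A →
    (l.foldl (· * ·) A ⊆ maxSubgroupAt S e ∧ e ∈ l.foldl (· * ·) A ∧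
     Pointlike V S (l.foldl (· * ·) A) ∧
     (∀ a ∈ l.foldl (· * ·) A, ∀ b ∈ l.foldl (· * ·) A, a * b ∈ l.foldl (· * ·) A) ∧
     IsNormalInMaxSubgroup S e (l.foldl (· * ·) A) ∧
     ∀ N ∈ l, N ⊆ l.foldl (· * ·) A) := by
  induction l with
  | nil =>
    intro A h1 h2 h3 h4 h5
    exact ⟨h1, h2, h3, h4, h5, by simp⟩
  | cons N l ih =>
    intro A hAG heA hAp hAcl hAnorm
    obtain ⟨hNsub, hNG, hNp, hNnorm⟩ := hl N List.mem_cons_self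
    obtain ⟨heN, hNinv⟩ := subgroup_e_mem hNsub hNG
    -- A * N is closed under multiplication
    have hcl : ∀ a ∈ A * N, ∀ b ∈ A * N, a * b ∈ A * N := by
      intro p hp q hq
      obtain ⟨a₁, ha₁, n₁, hn₁, rfl⟩ := Set.mem_mul.mp hp
      obtain ⟨a₂, ha₂, n₂, hn₂, rfl⟩ := Set.mem_mul.mp hq
      obtain ⟨n₁', hn₁', h11, h12⟩ := hNinv n₁ hn₁
      have hc : n₁ * a₂ * n₁' ∈ A :=
        hAnorm n₁ (hNG hn₁) n₁' (hNG hn₁') h11 h12 a₂ ha₂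
      have heq : (a₁ * n₁) * (a₂ * n₂) = (a₁ * (n₁ * a₂ * n₁')) * (n₁ * n₂) := by
        have h1 : n₁' * (n₁ * n₂) = n₂ := by
          rw [← mul_assoc, h12, (hNG hn₂).2.1]
        calc (a₁ * n₁) * (a₂ * n₂) = a₁ * ((n₁ * a₂) * n₂) := by
              rw [mul_assoc, ← mul_assoc n₁ a₂ n₂]
          _ = a₁ * ((n₁ * a₂) * (n₁' * (n₁ * n₂))) := by rw [h1]
          _ = (a₁ * (n₁ * a₂ * n₁')) * (n₁ * n₂) := by
              rw [← mul_assoc (n₁ * a₂) n₁' (n₁ * n₂), mul_assoc a₁]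
      rw [heq]
      exact Set.mul_mem_mul (hAcl a₁ ha₁ _ hc) (hNsub.1 n₁ hn₁ n₂ hn₂)
    -- A * N is normal
    have hnorm : IsNormalInMaxSubgroup S e (A * N) := by
      intro g hg y hy hgy hyg m hm
      obtain ⟨a, ha, n, hn, rfl⟩ := Set.mem_mul.mp hm
      rw [conj_mul_split he (hAG ha) hyg (hNG hn)]
      exact Set.mul_mem_mul (hAnorm g hg y hy hgy hyg a ha) (hNnorm g hg y hy hgy hyg n hn)
    have h := ih (fun N' hN' => hl N' (List.mem_cons_of_mem N hN')) (A * N)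
      (mul_subset_G he hAG hNG) (e_mem_mul he heA heN) (pointlike_mul V hAp hNp) hcl hnorm
    have hfold : (N :: l).foldl (· * ·) A = l.foldl (· * ·) (A * N) := rfl
    rw [hfold]
    refine ⟨h.1, h.2.1, h.2.2.1, h.2.2.2.1, h.2.2.2.2.1, ?_⟩
    intro N' hN'
    rcases List.mem_cons.mp hN' with h' | h'
    · rw [h']
      have hw := foldl_weak V he l (A * N) (mul_subset_G he hAG hNG) (e_mem_mul he heA heN)
        (pointlike_mul V hAp hNp)
        (fun N' hN' => ⟨(hl N' (List.mem_cons_of_mem N hN')).2.1,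
          (subgroup_e_mem (hl N' (List.mem_cons_of_mem N hN')).1
            (hl N' (List.mem_cons_of_mem N hN')).2.1).1,
          (hl N' (List.mem_cons_of_mem N hN')).2.2.1⟩)
      exact (subset_mul_right he hNG heA).trans hw.2.2.2.1
    · exact h.2.2.2.2.2 N' h'

lemma foldl_conj (he : e * e = e) {K : Set S} (hclK : ∀ a ∈ K, ∀ b ∈ K, a * b ∈ K)
    {g y : S} (hyg : y * g = e)
    (l : List (Set S)) :
    ∀ A : Set S, A ⊆ maxSubgroupAt S e → (∀ a ∈ A, g * a * y ∈ K) →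
    (∀ N ∈ l, N ⊆ maxSubgroupAt S e ∧ ∀ f ∈ N, g * f * y ∈ K) →
    ∀ m ∈ l.foldl (· * ·) A, g * m * y ∈ K := by
  induction l with
  | nil =>
    intro A _ hA _ m hm
    exact hA m hm
  | cons N l ih =>
    intro A hAG hA hl
    obtain ⟨hNG, hN⟩ := hl N List.mem_cons_self
    refine ih (A * N) (mul_subset_G he hAG hNG) ?_
      (fun N' hN' => hl N' (List.mem_cons_of_mem N hN'))
    intro m hm
    obtain ⟨a, ha, f, hf, rfl⟩ := Set.mem_mul.mp hm
    rw [conj_mul_split he (hAG ha) hyg (hNG hf)]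
    exact hclK _ (hA a ha) _ (hN f hf)

end MaxPt3

section MaxPt4

variable {S : Type} [Semigroup S] [Finite S]
set_option linter.unusedSectionVars false
set_option maxHeartbeats 1000000
variable (V : ∀ (T : Type) [Semigroup T] [Finite T], Prop)
variable {e : S}

lemma pointlike_subgroup_le_normal (he : e * e = e) {N : Set S} (hNsub : IsSubgroupOf S N)
    (hNG : N ⊆ maxSubgroupAt S e) (hNp : Pointlike V S N) :
    ∃ K : Set S, IsSubgroupOf S K ∧ K ⊆ maxSubgroupAt S e ∧ Pointlike V S K ∧
      IsNormalInMaxSubgroup S e K ∧ N ⊆ K := by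
  classical
  obtain ⟨heN, hNinv⟩ := subgroup_e_mem hNsub hNG
  haveI : Fintype S := Fintype.ofFinite S
  have heG : e ∈ maxSubgroupAt S e := e_mem_G he
  have hsG : ({e} : Set S) ⊆ maxSubgroupAt S e := Set.singleton_subset_iff.mpr heG
  have hsp : Pointlike V S ({e} : Set S) := pointlike_singleton V e
  -- conjugate factors
  set F : S × S → Set S := fun p =>
    {s | (p.1 ∈ maxSubgroupAt S e ∧ p.2 ∈ maxSubgroupAt S e ∧ p.1 * p.2 = e ∧ p.2 * p.1 = e) ∧
      ∃ m ∈ N, s = p.1 * m * p.2} ∪ {e} with hF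
  have hFweak : ∀ p : S × S, F p ⊆ maxSubgroupAt S e ∧ e ∈ F p ∧ Pointlike V S (F p) := by
    intro p
    refine ⟨?_, Or.inr rfl, ?_⟩
    · rintro s (⟨⟨h1, h2, _, _⟩, m, hm, rfl⟩ | hs)
      · exact G_mul (G_mul h1 (hNG hm)) h2
      · rw [Set.mem_singleton_iff] at hs; rw [hs]; exact heG
    · by_cases h : p.1 ∈ maxSubgroupAt S e ∧ p.2 ∈ maxSubgroupAt S e ∧
          p.1 * p.2 = e ∧ p.2 * p.1 = e
      · refine pointlike_mono V ?_ (pointlike_mul V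
          (pointlike_mul V (pointlike_singleton V p.1) hNp) (pointlike_singleton V p.2))
        rintro s (⟨_, m, hm, rfl⟩ | hs)
        · exact Set.mul_mem_mul (Set.mul_mem_mul rfl hm) rfl
        · rw [Set.mem_singleton_iff] at hs
          have h5 : e = p.1 * e * p.2 := by rw [h.1.1, h.2.2.1]
          rw [hs, h5]
          exact Set.mul_mem_mul (Set.mul_mem_mul rfl heN) rfl
      · refine pointlike_mono V ?_ hsp
        rintro s (⟨hval, _⟩ | hs)
        · exact absurd hval h
        · exact hs
  set lF : List (Set S) := (Finset.univ : Finset (S × S)).toList.map F with hlF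
  have hlFweak : ∀ Q ∈ lF, Q ⊆ maxSubgroupAt S e ∧ e ∈ Q ∧ Pointlike V S Q := by
    intro Q hQ
    obtain ⟨p, _, rfl⟩ := List.mem_map.mp hQ
    exact hFweak p
  have hw := foldl_weak V he lF {e} hsG rfl hsp hlFweak
  set P : Set S := lF.foldl (· * ·) {e} with hP
  obtain ⟨hPG, hPe, hPp, _, hPcont⟩ := hw
  have hFP : ∀ p : S × S, F p ⊆ P := by
    intro p
    exact hPcont (F p) (List.mem_map_of_mem (f := F) (Finset.mem_toList.mpr (Finset.mem_univ p)))
  have hNP : N ⊆ P := by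
    intro m hm
    refine hFP (e, e) (Or.inl ⟨⟨heG, heG, he, he⟩, m, hm, ?_⟩)
    rw [(hNG hm).2.1, (hNG hm).1]
  -- stabilize powers of P
  obtain ⟨n₀, hstab⟩ := pwE_stab he hPG hPe
  set K : Set S := pwE e P n₀ with hK
  have hKG : K ⊆ maxSubgroupAt S e := pwE_subset_G he hPG n₀
  have heK : e ∈ K := pwE_e_mem he hPe n₀
  have hKp : Pointlike V S K := pwE_pointlike V he hPp n₀
  have hKcl : ∀ a ∈ K, ∀ b ∈ K, a * b ∈ K := by
    intro a ha b hb
    have h := pwE_mul_subset he hPG n₀ n₀ (Set.mul_mem_mul ha hb)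
    rw [hstab (n₀ + n₀) (Nat.le_add_right n₀ n₀)] at h
    exact h
  have hPK : P ⊆ K := by
    intro p hp
    have h : p ∈ pwE e P (n₀ + 1) := by
      rw [pwE_succ]
      have h2 := Set.mul_mem_mul (pwE_e_mem he hPe n₀) hp
      rwa [(hPG hp).2.1] at h2
    rw [hstab (n₀ + 1) (Nat.le_succ n₀)] at h
    exact h
  have hKnorm : IsNormalInMaxSubgroup S e K := by
    intro g hg y hy hgy hyg
    have hconjE : g * e * y = e := by rw [hg.1, hgy]
    have hFK : ∀ Q ∈ lF, Q ⊆ maxSubgroupAt S e ∧ ∀ f ∈ Q, g * f * y ∈ K := by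
      intro Q hQ
      obtain ⟨p, _, rfl⟩ := List.mem_map.mp hQ
      refine ⟨(hFweak p).1, ?_⟩
      rintro f (⟨⟨h1, h2, h3, h4⟩, m, hm, rfl⟩ | hf)
      · have heq : g * (p.1 * m * p.2) * y = (g * p.1) * m * (p.2 * y) := by
          simp only [mul_assoc]
        rw [heq]
        apply hPK
        refine hFP (g * p.1, p.2 * y) (Or.inl ⟨⟨G_mul hg h1, G_mul h2 hy, ?_, ?_⟩, m, hm, rfl⟩)
        · calc (g * p.1) * (p.2 * y) = g * ((p.1 * p.2) * y) := by simp only [mul_assoc]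
            _ = g * (e * y) := by rw [h3]
            _ = g * y := by rw [hy.2.1]
            _ = e := hgy
        · calc (p.2 * y) * (g * p.1) = p.2 * ((y * g) * p.1) := by simp only [mul_assoc]
            _ = p.2 * (e * p.1) := by rw [hyg]
            _ = p.2 * p.1 := by rw [h1.2.1]
            _ = e := h4
      · rw [Set.mem_singleton_iff] at hf
        rw [hf, hconjE]; exact heK
    have hPconj : ∀ f ∈ P, g * f * y ∈ K := by
      refine foldl_conj he hKcl hyg lF {e} hsG ?_ hFK
      intro a ha
      rw [Set.mem_singleton_iff] at ha
      rw [ha, hconjE]; exact heK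
    have hall : ∀ n, ∀ m ∈ pwE e P n, g * m * y ∈ K := by
      intro n
      induction n with
      | zero =>
        intro m hm
        rw [pwE_zero, Set.mem_singleton_iff] at hm
        rw [hm, hconjE]; exact heK
      | succ n ih =>
        intro m hm
        rw [pwE_succ] at hm
        obtain ⟨a, ha, f, hf, rfl⟩ := Set.mem_mul.mp hm
        rw [conj_mul_split he (pwE_subset_G he hPG n ha) hyg (hPG hf)]
        exact hKcl _ (ih a ha) _ (hPconj f hf)
    exact hall n₀
  exact ⟨K, closed_subgroup he hKG heK hKcl, hKG, hKp, hKnorm, hNP.trans hPK⟩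

end MaxPt4

/-- the maximal subgroup `G_e` at an idempotent `e` has a unique maximal
`𝒱`-pointlike subgroup `M`; it is normal in `G_e`, contains every `𝒱`-pointlike
subgroup of `G_e`, and equals the product of all normal `𝒱`-pointlike subgroups
of `G_e`. -/
theorem exists_maximal_pointlike_subgroup
    (S : Type) [Semigroup S] [Finite S]
    (V : ∀ (T : Type) [Semigroup T] [Finite T], Prop)
    (e : S) (he : e * e = e) :
    ∃ M : Set S,
      -- `M` is a subgroup of `G_e`
      IsSubgroupOf S M ∧ M ⊆ maxSubgroupAt S e ∧
      -- `M` is `𝒱`-pointlike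
      Pointlike V S M ∧
      -- `M` is normal in `G_e`
      IsNormalInMaxSubgroup S e M ∧
      -- `M` contains every `𝒱`-pointlike subgroup of `G_e`
      (∀ N : Set S, IsSubgroupOf S N → N ⊆ maxSubgroupAt S e → Pointlike V S N → N ⊆ M) ∧
      -- `M` is the product of all normal `𝒱`-pointlike subgroups of `G_e`
      (∃ l : List (Set S),
        (∀ N ∈ l, IsSubgroupOf S N ∧ N ⊆ maxSubgroupAt S e ∧ Pointlike V S N ∧
            IsNormalInMaxSubgroup S e N) ∧
        (∀ N : Set S, IsSubgroupOf S N → N ⊆ maxSubgroupAt S e → Pointlike V S N →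
            IsNormalInMaxSubgroup S e N → N ∈ l) ∧
        M = l.foldl (· * ·) ({e} : Set S)) ∧
      -- uniqueness: `M` is the unique maximal `𝒱`-pointlike subgroup of `G_e`
      (∀ M' : Set S, IsSubgroupOf S M' → M' ⊆ maxSubgroupAt S e → Pointlike V S M' →
        (∀ N : Set S, IsSubgroupOf S N → N ⊆ maxSubgroupAt S e → Pointlike V S N → N ⊆ M') →
        M' = M) := by
  classical
  have heG : e ∈ maxSubgroupAt S e := e_mem_G he
  have hsG : ({e} : Set S) ⊆ maxSubgroupAt S e := Set.singleton_subset_iff.mpr heG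
  have hse : e ∈ ({e} : Set S) := rfl
  have hsp : Pointlike V S ({e} : Set S) := pointlike_singleton V e
  have hscl : ∀ a ∈ ({e} : Set S), ∀ b ∈ ({e} : Set S), a * b ∈ ({e} : Set S) := by
    intro a ha b hb
    rw [Set.mem_singleton_iff] at ha hb ⊢
    rw [ha, hb, he]
  have hsnorm : IsNormalInMaxSubgroup S e ({e} : Set S) := by
    intro g hg y hy hgy hyg m hm
    rw [Set.mem_singleton_iff] at hm ⊢
    rw [hm, hg.1, hgy]
  have hfin : {N : Set S | IsSubgroupOf S N ∧ N ⊆ maxSubgroupAt S e ∧ Pointlike V S N ∧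
      IsNormalInMaxSubgroup S e N}.Finite := Set.toFinite _
  set l : List (Set S) := hfin.toFinset.toList with hl
  have hlmem : ∀ N : Set S, N ∈ l ↔ (IsSubgroupOf S N ∧ N ⊆ maxSubgroupAt S e ∧
      Pointlike V S N ∧ IsNormalInMaxSubgroup S e N) := by
    intro N
    rw [hl, Finset.mem_toList, Set.Finite.mem_toFinset, Set.mem_setOf_eq]
  obtain ⟨hMG, heM, hMp, hMcl, hMnorm, hMcont⟩ :=
    foldl_strong V he l (fun N hN => (hlmem N).mp hN) {e} hsG hse hsp hscl hsnorm
  have hMsub := closed_subgroup he hMG heM hMcl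
  have hcontains : ∀ N : Set S, IsSubgroupOf S N → N ⊆ maxSubgroupAt S e → Pointlike V S N →
      N ⊆ l.foldl (· * ·) {e} := by
    intro N h1 h2 h3
    obtain ⟨K, hK1, hK2, hK3, hK4, hNK⟩ := pointlike_subgroup_le_normal V he h1 h2 h3
    exact hNK.trans (hMcont K ((hlmem K).mpr ⟨hK1, hK2, hK3, hK4⟩))
  refine ⟨l.foldl (· * ·) {e}, hMsub, hMG, hMp, hMnorm, hcontains,
    ⟨l, fun N hN => (hlmem N).mp hN, fun N h1 h2 h3 h4 => (hlmem N).mpr ⟨h1, h2, h3, h4⟩, rfl⟩,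
    ?_⟩
  intro M' h1 h2 h3 hmax
  exact Set.Subset.antisymm (hcontains M' h1 h2 h3) (hmax _ hMsub hMG hMp)
end

section
/- Let G be a finite group, let A be a finite aperiodic semigroup, and let r be a relational morphism from G (regarded as a semigroup) to A. Then there exists an idempotent f ∈ A such that G ⊆ f r⁻¹, i.e., f ∈ r(g) for every g ∈ G. -/
open Pointwise

def IsAperiodicSemigroup (A : Type) [Semigroup A] : Prop :=
  ∀ N : Set A, IsSubgroupOf A N → N.Subsingleton

section Aux
variable {S : Type} [Semigroup S]

/-- `pw x n = x^(n+1)` for a semigroup element. -/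
def pw (x : S) : ℕ → S
  | 0 => x
  | n+1 => pw x n * x

lemma pw_add (x : S) (m n : ℕ) : pw x (m + n + 1) = pw x m * pw x n := by
  induction n with
  | zero => rfl
  | succ n ih =>
      rw [show m + (n+1) + 1 = (m + n + 1) + 1 by ring]
      show pw x (m + n + 1) * x = pw x m * (pw x n * x)
      rw [ih, mul_assoc]

lemma exists_idem_pw [Finite S] (x : S) : ∃ n, pw x n * pw x n = pw x n := by
  obtain ⟨a, b, hab, heq⟩ := Finite.exists_ne_map_eq_of_infinite (pw x)
  have key : ∀ i j : ℕ, i < j → pw x i = pw x j →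
      ∃ n, pw x n * pw x n = pw x n := by
    intro i j hij hpw
    set p := j - i with hp
    have hp1 : 1 ≤ p := by omega
    have hperiod : ∀ k, pw x (i + k + p) = pw x (i + k) := by
      intro k
      induction k with
      | zero =>
          rw [show i + 0 + p = j by omega, show i + 0 = i by omega]
          exact hpw.symm
      | succ k ih =>
          rw [show i + (k+1) + p = (i + k + p) + 1 by ring]
          show pw x (i + k + p) * x = _
          rw [ih]
          rfl
    have hmul : ∀ m k, pw x (i + k + m * p) = pw x (i + k) := by
      intro m
      induction m with
      | zero => intro k; simp
      | succ m ih =>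
          intro k
          rw [show i + k + (m+1) * p = (i + (k + m * p)) + p by ring,
            show i + (k + m * p) + p = (i + (k + m*p)) + p by ring]
          have := hperiod (k + m * p)
          rw [show i + (k + m * p) + p = i + (k + m*p) + p by ring] at this
          rw [this, show i + (k + m * p) = i + k + m * p by ring, ih k]
    refine ⟨(i+1)*p - 1, ?_⟩
    set N := (i+1)*p - 1 with hN
    have hle : i + 1 ≤ (i+1)*p := Nat.le_mul_of_pos_right _ (by omega)
    have hNi : N + 1 = (i+1)*p := by omega
    have hk : N = i + (N - i) := by omega
    rw [← pw_add]
    rw [show N + N + 1 = i + (N - i) + (i+1) * p by omega]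
    rw [hmul (i+1) (N - i), ← hk]
  rcases lt_or_gt_of_ne hab with h | h
  · exact key a b h heq
  · exact key b a h heq.symm

end Aux

/-- for any relational morphism `r` from a finite group `G` to a finite
aperiodic semigroup `A`, some idempotent `f ∈ A` satisfies `G ⊆ f r⁻¹`. -/
theorem group_covered_by_idempotent_of_aperiodic
    (G : Type) [Group G] [Finite G] (A : Type) [Semigroup A] [Finite A]
    (hA : IsAperiodicSemigroup A) (r : RelMorph G A) :
    ∃ f : A, f * f = f ∧ ∀ g : G, f ∈ r.toFun g := by
  classical
  -- the graph of the relational morphism, a subsemigroup of `G × A`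
  set R : Set (G × A) := {p | p.2 ∈ r.toFun p.1} with hRdef
  have hRmul : ∀ p ∈ R, ∀ q ∈ R, p * q ∈ R := by
    intro p hp q hq
    exact r.mul_subset p.1 q.1 (Set.mul_mem_mul hp hq)
  have hpwR : ∀ x ∈ R, ∀ n, pw x n ∈ R := by
    intro x hx n
    induction n with
    | zero => exact hx
    | succ n ih => exact hRmul _ ih _ hx
  -- the set of idempotents of R
  set E : Set (G × A) := {e | e ∈ R ∧ e * e = e} with hEdef
  have hEne : E.Nonempty := by
    obtain ⟨a, ha⟩ := r.nonempty 1
    have hx : ((1 : G), a) ∈ R := ha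
    obtain ⟨n, hn⟩ := exists_idem_pw ((1 : G), a)
    exact ⟨pw ((1 : G), a) n, hpwR _ hx n, hn⟩
  -- local "corner" sets eRe
  set Q : G × A → Set (G × A) := fun e => {x | x ∈ R ∧ e * x * e = x} with hQdef
  -- pick e an idempotent minimizing the size of Q e
  obtain ⟨e, heE, hemin⟩ :=
    Set.exists_min_image E (fun e => (Q e).ncard) (Set.toFinite E) hEne
  obtain ⟨heR, hee⟩ := heE
  -- basic facts about Q e
  have hQleft : ∀ x ∈ Q e, e * x = x := by
    intro x hx
    calc e * x = e * (e * x * e) := by rw [hx.2]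
    _ = (e * e) * x * e := by simp only [mul_assoc]
    _ = e * x * e := by rw [hee]
    _ = x := hx.2
  have hQright : ∀ x ∈ Q e, x * e = x := by
    intro x hx
    calc x * e = (e * x * e) * e := by rw [hx.2]
    _ = e * x * (e * e) := by simp only [mul_assoc]
    _ = e * x * e := by rw [hee]
    _ = x := hx.2
  have hQmul : ∀ x ∈ Q e, ∀ y ∈ Q e, x * y ∈ Q e := by
    intro x hx y hy
    refine ⟨hRmul _ hx.1 _ hy.1, ?_⟩
    calc e * (x * y) * e = (e * x) * (y * e) := by rw [mul_assoc, mul_assoc, mul_assoc]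
    _ = x * y := by rw [hQleft x hx, hQright y hy]
  have heQ : e ∈ Q e := ⟨heR, by rw [hee, hee]⟩
  -- any idempotent in Q e is e itself
  have hidemQ : ∀ e' ∈ Q e, e' * e' = e' → e' = e := by
    intro e' he' hee'
    have he'E : e' ∈ E := ⟨he'.1, hee'⟩
    have h1 : e * e' = e' := by
      calc e * e' = e * (e * e' * e) := by rw [he'.2]
      _ = (e * e) * e' * e := by simp only [mul_assoc]
      _ = e * e' * e := by rw [hee]
      _ = e' := he'.2
    have h2 : e' * e = e' := by
      calc e' * e = (e * e' * e) * e := by rw [he'.2]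
      _ = e * e' * (e * e) := by simp only [mul_assoc]
      _ = e * e' * e := by rw [hee]
      _ = e' := he'.2
    have hsub : Q e' ⊆ Q e := by
      intro x hx
      refine ⟨hx.1, ?_⟩
      calc e * x * e = e * (e' * x * e') * e := by rw [hx.2]
      _ = (e * e') * x * (e' * e) := by simp only [mul_assoc]
      _ = e' * x * e' := by rw [h1, h2]
      _ = x := hx.2
    have hcard : (Q e).ncard ≤ (Q e').ncard := hemin e' he'E
    have heqQ : Q e' = Q e := Set.eq_of_subset_of_ncard_le hsub hcard (Set.toFinite _)
    have heQ' : e ∈ Q e' := heqQ ▸ heQ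
    calc e' = e' * e' := hee'.symm
    _ = (e' * e) * e' := by rw [h2]
    _ = e := heQ'.2
  -- Q e is a group with identity e: inverses exist
  have hinv : ∀ x ∈ Q e, ∃ y ∈ Q e, x * y = e ∧ y * x = e := by
    intro x hx
    have hpwQ : ∀ n, pw x n ∈ Q e := by
      intro n
      induction n with
      | zero => exact hx
      | succ n ih => exact hQmul _ ih _ hx
    obtain ⟨n, hn⟩ := exists_idem_pw x
    have hne : pw x n = e := hidemQ _ (hpwQ n) hn
    cases n with
    | zero =>
        refine ⟨e, heQ, ?_, ?_⟩
        · have : x = e := hne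
          rw [this, hee]
        · have : x = e := hne
          rw [this, hee]
    | succ m =>
        refine ⟨pw x m, hpwQ m, ?_, ?_⟩
        · have : x * pw x m = pw x (m + 1) := by
            have := pw_add x 0 m
            rw [show 0 + m + 1 = m + 1 by ring] at this
            rw [this]; rfl
          rw [this, hne]
        · show pw x m * x = e
          rw [← hne]; rfl
  -- e = (1, f) with f idempotent
  have he1 : e.1 = 1 := by
    have : e.1 * e.1 = e.1 := by
      have := congrArg Prod.fst hee
      simpa using this
    exact mul_eq_left.mp this
  set f := e.2 with hf
  have hff : f * f = f := by
    have := congrArg Prod.snd hee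
    simpa using this
  -- the projection of Q e to A is a subgroup of A
  set N : Set A := Prod.snd '' (Q e) with hNdef
  have hNsub : IsSubgroupOf A N := by
    constructor
    · rintro a ⟨x, hx, rfl⟩ b ⟨y, hy, rfl⟩
      exact ⟨x * y, hQmul _ hx _ hy, rfl⟩
    · refine ⟨f, ⟨e, heQ, rfl⟩, ?_, ?_⟩
      · rintro a ⟨x, hx, rfl⟩
        constructor
        · have := congrArg Prod.snd (hQleft x hx)
          simpa using this
        · have := congrArg Prod.snd (hQright x hx)
          simpa using this
      · rintro a ⟨x, hx, rfl⟩
        obtain ⟨y, hy, hxy, hyx⟩ := hinv x hx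
        refine ⟨y.2, ⟨y, hy, rfl⟩, ?_, ?_⟩
        · have := congrArg Prod.snd hxy
          simpa using this
        · have := congrArg Prod.snd hyx
          simpa using this
  have hNsingle : N.Subsingleton := hA N hNsub
  have hfN : f ∈ N := ⟨e, heQ, rfl⟩
  refine ⟨f, hff, ?_⟩
  intro g
  obtain ⟨a, ha⟩ := r.nonempty g
  have hx : (g, a) ∈ R := ha
  have hy : e * (g, a) * e ∈ Q e := by
    refine ⟨hRmul _ (hRmul _ heR _ hx) _ heR, ?_⟩
    calc e * (e * (g, a) * e) * e = (e * e) * (g, a) * (e * e) := by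
          simp only [mul_assoc]
    _ = e * (g, a) * e := by rw [hee]
  have hyN : (e * (g, a) * e).2 ∈ N := ⟨_, hy, rfl⟩
  have hy2 : (e * (g, a) * e).2 = f := hNsingle hyN hfN
  have hy1 : (e * (g, a) * e).1 = g := by
    show e.1 * g * e.1 = g
    rw [he1, one_mul, mul_one]
  have hyR : (e * (g, a) * e) ∈ R := hy.1
  have : (e * (g, a) * e).2 ∈ r.toFun ((e * (g, a) * e).1) := hyR
  rw [hy1, hy2] at this
  exact this
end

section
/- Let 𝒲 be any class of finite semigroups, and let Ap⋆𝒲 denote the class of all finite semigroups T for which there exists a semigroup U ∈ 𝒲 and an aperiodic relational morphism from T to U. Then a subgroup N of a finite semigroup S is (Ap⋆𝒲)-pointlike if and only if N is 𝒲-pointlike. -/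
open Pointwise

/-- A relational morphism `θ : T → U` is aperiodic if for every idempotent `e ∈ U`
the subsemigroup `e θ⁻¹` of `T` is aperiodic, i.e. all subgroups of `T` contained
in `e θ⁻¹` are trivial. -/
def IsAperiodicRelMorph {T U : Type} [Semigroup T] [Semigroup U] (θ : RelMorph T U) : Prop :=
  ∀ e : U, e * e = e → ∀ N : Set T, N ⊆ θ.preim e → IsSubgroupOf T N → N.Subsingleton

/-- `Ap ⋆ 𝒲`: the class of finite semigroups admitting an aperiodic relational
morphism to some member of `𝒲`. -/
def ApStar (W : ∀ (U : Type) [Semigroup U] [Finite U], Prop)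
    (T : Type) [iT : Semigroup T] [Finite T] : Prop :=
  ∃ (U : Type) (iU : Semigroup U) (fU : Finite U) (θ : @RelMorph T U iT iU),
    @W U iU fU ∧ @IsAperiodicRelMorph T U iT iU θ


section Aux
variable {X : Type} [Semigroup X]

def spow (u : X) : ℕ → X
  | 0 => u
  | n+1 => spow u n * u

lemma spow_add (u : X) (m n : ℕ) : spow u m * spow u n = spow u (m + n + 1) := by
  induction n with
  | zero => rfl
  | succ n ih =>
      show spow u m * (spow u n * u) = _
      rw [← mul_assoc, ih]; rfl

lemma exists_idem_spow [Finite X] (u : X) : ∃ n, spow u n * spow u n = spow u n := by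
  obtain ⟨i, j, hne, heq⟩ := Finite.exists_ne_map_eq_of_infinite (spow u)
  have key : ∀ i j : ℕ, i < j → spow u i = spow u j →
      ∃ n, spow u n * spow u n = spow u n := by
    intro i j hij heq
    set d := j - i with hd
    have hdpos : 0 < d := by omega
    have step : ∀ m, i ≤ m → spow u (m + d) = spow u m := by
      intro m hm
      rcases eq_or_lt_of_le hm with h | h
      · have h1 : m + d = j := by omega
        rw [h1, ← h]
        exact heq.symm
      · obtain ⟨r, hr⟩ : ∃ r, m = i + r + 1 := ⟨m - i - 1, by omega⟩
        have h1 : m + d = (i + d) + r + 1 := by omega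
        have h2 : i + d = j := by omega
        rw [h1, ← spow_add, h2, ← heq, spow_add, hr]
    have iter : ∀ k m, i ≤ m → spow u (m + k * d) = spow u m := by
      intro k
      induction k with
      | zero => intro m _; simp
      | succ k ih =>
          intro m hm
          have h1 : m + (k+1) * d = (m + d) + k * d := by ring
          rw [h1, ih (m + d) (by omega), step m hm]
    have hpos : 0 < d * (i + 1) := Nat.mul_pos hdpos (Nat.succ_pos i)
    have hge : i + 1 ≤ d * (i + 1) := Nat.le_mul_of_pos_left (i + 1) hdpos
    refine ⟨d * (i + 1) - 1, ?_⟩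
    set n := d * (i + 1) - 1 with hn
    have h1 : n + n + 1 = n + (i + 1) * d := by
      have : n + 1 = d * (i + 1) := by omega
      calc n + n + 1 = n + (n + 1) := by ring
      _ = n + d * (i + 1) := by rw [this]
      _ = n + (i + 1) * d := by ring
    rw [spow_add, h1, iter (i + 1) n (by omega)]
  rcases hne.lt_or_gt with h | h
  · exact key i j h heq
  · exact key j i h heq.symm

/-- A nonempty sub-semigroup on which left and right translations are surjective
is a subgroup. -/
lemma isSubgroupOf_of_trans (M : Set X) (hne : M.Nonempty)
    (hmul : ∀ a ∈ M, ∀ b ∈ M, a * b ∈ M)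
    (hl : ∀ a ∈ M, ∀ b ∈ M, ∃ c ∈ M, a * c = b)
    (hr : ∀ a ∈ M, ∀ b ∈ M, ∃ c ∈ M, c * a = b) : IsSubgroupOf X M := by
  obtain ⟨a, ha⟩ := hne
  obtain ⟨e, he, hae⟩ := hl a ha a ha
  have hre : ∀ b ∈ M, b * e = b := by
    intro b hb
    obtain ⟨c, hc, hca⟩ := hr a ha b hb
    rw [← hca, mul_assoc, hae]
  obtain ⟨e', he', hea⟩ := hr a ha a ha
  have hle : ∀ b ∈ M, e' * b = b := by
    intro b hb
    obtain ⟨c, hc, hca⟩ := hl a ha b hb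
    rw [← hca, ← mul_assoc, hea]
  have hee : e' = e := by rw [← hre e' he', hle e he]
  refine ⟨hmul, e, he, fun b hb => ⟨by rw [← hee, hle b hb], hre b hb⟩, ?_⟩
  intro b hb
  obtain ⟨c, hc, hbc⟩ := hl b hb e he
  obtain ⟨c', hc', hcb⟩ := hr b hb e he
  have : c' = c := by
    rw [← hre c' hc', ← hbc, ← mul_assoc, hcb, ← hee, hle c hc]
  exact ⟨c, hc, hbc, by rw [← this, hcb]⟩

end Aux

section Aux2
variable {S T : Type} [Semigroup S] [Semigroup T]

lemma isSubgroupOf_image_snd {M : Set (S × T)} (h : IsSubgroupOf (S × T) M) :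
    IsSubgroupOf T (Prod.snd '' M) := by
  obtain ⟨hmul, ε, hε, hid, hinv⟩ := h
  refine ⟨?_, ε.2, ⟨ε, hε, rfl⟩, ?_, ?_⟩
  · rintro _ ⟨p, hp, rfl⟩ _ ⟨q, hq, rfl⟩
    exact ⟨p * q, hmul p hp q hq, rfl⟩
  · rintro _ ⟨p, hp, rfl⟩
    exact ⟨congrArg Prod.snd (hid p hp).1, congrArg Prod.snd (hid p hp).2⟩
  · rintro _ ⟨p, hp, rfl⟩
    obtain ⟨q, hq, h1, h2⟩ := hinv p hp
    exact ⟨q.2, ⟨q, hq, rfl⟩, congrArg Prod.snd h1, congrArg Prod.snd h2⟩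

/-- Composition of relational morphisms. -/
def RelMorph.comp {U : Type} [Semigroup U] (θ : RelMorph T U) (r : RelMorph S T) :
    RelMorph S U where
  toFun s := ⋃ t ∈ r.toFun s, θ.toFun t
  nonempty s := by
    obtain ⟨t, ht⟩ := r.nonempty s
    obtain ⟨u, hu⟩ := θ.nonempty t
    exact ⟨u, Set.mem_biUnion ht hu⟩
  mul_subset s₁ s₂ := by
    rintro x hx
    rw [Set.mem_mul] at hx
    obtain ⟨a, ha, b, hb, rfl⟩ := hx
    simp only [Set.mem_iUnion₂] at ha hb ⊢
    obtain ⟨t₁, ht₁, ha⟩ := ha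
    obtain ⟨t₂, ht₂, hb⟩ := hb
    exact ⟨t₁ * t₂, r.mul_subset s₁ s₂ (Set.mul_mem_mul ht₁ ht₂),
      θ.mul_subset t₁ t₂ (Set.mul_mem_mul ha hb)⟩

/-- The identity relational morphism is aperiodic. -/
def RelMorph.id (T : Type) [Semigroup T] : RelMorph T T where
  toFun t := {t}
  nonempty t := ⟨t, rfl⟩
  mul_subset s₁ s₂ := by simp

lemma id_aperiodic (T : Type) [Semigroup T] : IsAperiodicRelMorph (RelMorph.id T) := by
  intro e he M hM _
  intro a ha b hb
  have h1 : a = e := (hM ha : e ∈ ({a} : Set T)).symm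
  have h2 : b = e := (hM hb : e ∈ ({b} : Set T)).symm
  rw [h1, h2]

end Aux2

/-- a subgroup `N` of a finite semigroup `S` is `(Ap⋆𝒲)`-pointlike
if and only if it is `𝒲`-pointlike. -/
theorem subgroup_apstar_pointlike_iff
    (W : ∀ (U : Type) [Semigroup U] [Finite U], Prop)
    (S : Type) [Semigroup S] [Finite S]
    (N : Set S) (hN : IsSubgroupOf S N) :
    Pointlike (ApStar W) S N ↔ Pointlike W S N := by
  obtain ⟨hNmul, e, heN, hid, hinv⟩ := hN
  constructor
  · -- easy direction: members of 𝒲 are in Ap⋆𝒲 via the identity morphism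
    intro h T iT fT hT r
    exact h T ⟨T, iT, fT, RelMorph.id T, hT, id_aperiodic T⟩ r
  · -- hard direction
    intro h T iT fT hT r
    obtain ⟨U, iU, fU, θ, hU, hap⟩ := hT
    obtain ⟨u, hu⟩ := h U hU (θ.comp r)
    obtain ⟨n, hfn⟩ := exists_idem_spow u
    set f := spow u n with hf
    -- every element of N lies in (θ ∘ r)⁻¹ (spow u k) for all k
    have hcomp : ∀ k, ∀ s ∈ N, spow u k ∈ (θ.comp r).toFun s := by
      intro k
      induction k with
      | zero => intro s hs; exact hu hs
      | succ k ih =>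
          intro s hs
          have h1 : spow u (k+1) = spow u k * u := rfl
          have h2 : s * e = s := (hid s hs).2
          rw [h1, ← h2]
          exact (θ.comp r).mul_subset s e (Set.mul_mem_mul (ih s hs) (hu heN))
    have hfN : ∀ s ∈ N, ∃ t ∈ r.toFun s, f ∈ θ.toFun t := by
      intro s hs
      have := hcomp n s hs
      simpa only [RelMorph.comp, Set.mem_iUnion₂, exists_prop] using this
    -- the graph semigroup
    set R0 : Set (S × T) :=
      {p | p.1 ∈ N ∧ p.2 ∈ r.toFun p.1 ∧ f ∈ θ.toFun p.2} with hR0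
    set C : Set (Set (S × T)) :=
      {M | M ⊆ R0 ∧ (∀ p ∈ M, ∀ q ∈ M, p * q ∈ M) ∧ ∀ s ∈ N, ∃ t, (s, t) ∈ M}
      with hC
    have hR0C : R0 ∈ C := by
      refine ⟨le_refl _, ?_, ?_⟩
      · rintro p ⟨hp1, hp2, hp3⟩ q ⟨hq1, hq2, hq3⟩
        refine ⟨hNmul _ hp1 _ hq1, r.mul_subset _ _ (Set.mul_mem_mul hp2 hq2), ?_⟩
        show f ∈ θ.toFun (p.2 * q.2)
        rw [← hfn]
        exact θ.mul_subset _ _ (Set.mul_mem_mul hp3 hq3)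
      · intro s hs
        obtain ⟨t, ht1, ht2⟩ := hfN s hs
        exact ⟨t, hs, ht1, ht2⟩
    -- take a minimal element of C
    obtain ⟨M, hMC, hMmin⟩ :=
      Set.Finite.exists_minimalFor (fun M : Set (S × T) => M) C
        (Set.toFinite C) ⟨R0, hR0C⟩
    obtain ⟨hMR0, hMmul, hMproj⟩ := hMC
    have hmem1 : ∀ p ∈ M, p.1 ∈ N := fun p hp => (hMR0 hp).1
    have key : ∀ L : Set (S × T), L ⊆ M → (∀ p ∈ L, ∀ q ∈ L, p * q ∈ L) →
        (∀ s ∈ N, ∃ t, (s, t) ∈ L) → L = M := by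
      intro L hLM hLmul hLproj
      have hLC : L ∈ C := ⟨fun p hp => hMR0 (hLM hp), hLmul, hLproj⟩
      have := le_antisymm (hMmin hLC hLM) hLM
      exact le_antisymm hLM (le_of_eq this)
    -- left translations are surjective on M
    have hl : ∀ a ∈ M, ∀ b ∈ M, ∃ c ∈ M, a * c = b := by
      intro a ha b hb
      set L : Set (S × T) := (fun q => a * q) '' M with hL
      have hLM : L ⊆ M := by rintro _ ⟨q, hq, rfl⟩; exact hMmul a ha q hq
      have heqL : L = M := by
        refine key L hLM ?_ ?_
        · rintro _ ⟨q, hq, rfl⟩ _ ⟨q', hq', rfl⟩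
          exact ⟨q * (a * q'), hMmul q hq _ (hLM ⟨q', hq', rfl⟩),
            (mul_assoc a q (a * q')).symm⟩
        · intro s hs
          obtain ⟨b', hb', h1, h2⟩ := hinv a.1 (hmem1 a ha)
          obtain ⟨t', ht'⟩ := hMproj _ (hNmul _ hb' _ hs)
          refine ⟨a.2 * t', ⟨(b' * s, t'), ht', ?_⟩⟩
          have : a.1 * (b' * s) = s := by rw [← mul_assoc, h1, (hid s hs).1]
          exact Prod.ext this rfl
      rw [← heqL] at hb
      obtain ⟨c, hc, hac⟩ := hb
      exact ⟨c, hc, hac⟩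
    -- right translations are surjective on M
    have hr2 : ∀ a ∈ M, ∀ b ∈ M, ∃ c ∈ M, c * a = b := by
      intro a ha b hb
      set L : Set (S × T) := (fun q => q * a) '' M with hL
      have hLM : L ⊆ M := by rintro _ ⟨q, hq, rfl⟩; exact hMmul q hq a ha
      have heqL : L = M := by
        refine key L hLM ?_ ?_
        · rintro _ ⟨q, hq, rfl⟩ _ ⟨q', hq', rfl⟩
          refine ⟨(q * a) * q', hMmul _ (hLM ⟨q, hq, rfl⟩) q' hq', ?_⟩
          simp only [mul_assoc]
        · intro s hs
          obtain ⟨b', hb', h1, h2⟩ := hinv a.1 (hmem1 a ha)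
          obtain ⟨t', ht'⟩ := hMproj _ (hNmul _ hs _ hb')
          refine ⟨t' * a.2, ⟨(s * b', t'), ht', ?_⟩⟩
          have : (s * b') * a.1 = s := by rw [mul_assoc, h2, (hid s hs).2]
          exact Prod.ext this rfl
      rw [← heqL] at hb
      obtain ⟨c, hc, hac⟩ := hb
      exact ⟨c, hc, hac⟩
    -- M is a subgroup of S × T
    have hMne : M.Nonempty := by
      obtain ⟨t, ht⟩ := hMproj e heN
      exact ⟨(e, t), ht⟩
    have hMgrp : IsSubgroupOf (S × T) M := isSubgroupOf_of_trans M hMne hMmul hl hr2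
    -- its projection to T is a subgroup contained in θ⁻¹ f, hence a singleton
    have hGgrp : IsSubgroupOf T (Prod.snd '' M) := isSubgroupOf_image_snd hMgrp
    have hGsub : Prod.snd '' M ⊆ θ.preim f := by
      rintro _ ⟨p, hp, rfl⟩
      exact (hMR0 hp).2.2
    have hGss : (Prod.snd '' M).Subsingleton := hap f hfn _ hGsub hGgrp
    obtain ⟨p0, hp0⟩ := hMne
    refine ⟨p0.2, ?_⟩
    intro s hs
    obtain ⟨t, ht⟩ := hMproj s hs
    have : t = p0.2 := hGss ⟨(s, t), ht, rfl⟩ ⟨p0, hp0, rfl⟩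
    have h2 : t ∈ r.toFun s := (hMR0 ht).2.1
    rw [← this]
    exact h2
end

section
/- Let G be a finite group and B a finite set, and let G act on G × B by g·(h,b) = (gh,b). Let Y ⊆ G × B and let Π be a partition of Y (a collection of nonempty, pairwise disjoint subsets of Y whose union is Y); G acts on such pairs by g·(Y,Π) = (gY, {gπ : π ∈ Π}). Then (Y,Π) is invariant, i.e., g·(Y,Π) = (Y,Π) for all g ∈ G, if and only if: Y = G × B' for some subset B' ⊆ B, and for every class π ∈ Π the orbit Gπ = {gπ : g ∈ G} is contained in Π and is a partition of G × B'' for some subset B'' ⊆ B'. -/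
/-- The left `G`-action on subsets of `G × B`: `g · Y = {(g h, b) : (h, b) ∈ Y}`. -/
def gAct {G B : Type} [Mul G] (g : G) (Y : Set (G × B)) : Set (G × B) :=
  (fun p : G × B => (g * p.1, p.2)) '' Y

/-- `C` is a partition of `Y`: a collection of nonempty pairwise disjoint sets
whose union is `Y`. -/
def IsPartitionOf {α : Type} (C : Set (Set α)) (Y : Set α) : Prop :=
  (∀ c ∈ C, c.Nonempty) ∧ C.PairwiseDisjoint id ∧ ⋃₀ C = Y

lemma mem_gAct {G B : Type} [Group G] {g : G} {S : Set (G × B)} {p : G × B} :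
    p ∈ gAct g S ↔ (g⁻¹ * p.1, p.2) ∈ S := by
  constructor
  · rintro ⟨⟨h, b⟩, hq, rfl⟩; simpa using hq
  · intro hq; exact ⟨_, hq, by simp⟩

lemma gAct_gAct {G B : Type} [Group G] (g h : G) (S : Set (G × B)) :
    gAct g (gAct h S) = gAct (g * h) S := by
  ext p; simp [mem_gAct, mul_assoc]

lemma gAct_one {G B : Type} [Group G] (S : Set (G × B)) : gAct (1 : G) S = S := by
  ext p; simp [mem_gAct]

/-- a set-partition pair `(Y, P)` on `G × B` is `G`-invariant iff
`Y = G × B'` for some `B' ⊆ B` and for every class `π ∈ P` the orbit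
`Gπ` is contained in `P` and partitions `G × B''` for some `B'' ⊆ B'`. -/
theorem invariant_set_partition_iff
    (G B : Type) [Group G] [Finite G] [Finite B]
    (Y : Set (G × B)) (P : Set (Set (G × B)))
    (hP : IsPartitionOf P Y) :
    (∀ g : G, gAct g Y = Y ∧ (gAct g) '' P = P)
      ↔
    (∃ B' : Set B, Y = {p : G × B | p.2 ∈ B'} ∧
      ∀ π ∈ P,
        Set.range (fun g : G => gAct g π) ⊆ P ∧
        ∃ B'' : Set B, B'' ⊆ B' ∧
          IsPartitionOf (Set.range fun g : G => gAct g π)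
            {p : G × B | p.2 ∈ B''}) := by
  obtain ⟨hne, hdisj, hun⟩ := hP
  constructor
  · intro h
    refine ⟨Prod.snd '' Y, ?_, ?_⟩
    · ext p
      constructor
      · intro hp; exact ⟨p, hp, rfl⟩
      · rintro ⟨q, hq, hq2⟩
        have := (h (p.1 * q.1⁻¹)).1
        rw [← this, mem_gAct]
        have : ((p.1 * q.1⁻¹)⁻¹ * p.1, p.2) = q := by
          ext <;> simp [hq2.symm]
        rw [this]; exact hq
    · intro π hπ
      have hrange : Set.range (fun g : G => gAct g π) ⊆ P := by
        rintro _ ⟨g, rfl⟩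
        rw [← (h g).2]
        exact ⟨π, hπ, rfl⟩
      refine ⟨hrange, Prod.snd '' π, ?_, ?_, ?_, ?_⟩
      · exact Set.image_mono (by rw [← hun]; exact Set.subset_sUnion_of_mem hπ)
      · rintro c hc
        obtain ⟨g, rfl⟩ := hc
        obtain ⟨q, hq⟩ := hne π hπ
        exact ⟨_, ⟨q, hq, rfl⟩⟩
      · intro x hx y hy hxy
        exact hdisj (hrange hx) (hrange hy) hxy
      · ext p
        simp only [Set.mem_sUnion, Set.mem_range, Set.mem_setOf_eq, Set.mem_image]
        constructor
        · rintro ⟨_, ⟨g, rfl⟩, hp⟩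
          rw [mem_gAct] at hp
          exact ⟨_, hp, rfl⟩
        · rintro ⟨q, hq, hq2⟩
          refine ⟨_, ⟨p.1 * q.1⁻¹, rfl⟩, ?_⟩
          rw [mem_gAct]
          have : ((p.1 * q.1⁻¹)⁻¹ * p.1, p.2) = q := by
            ext <;> simp [hq2.symm]
          rw [this]; exact hq
  · rintro ⟨B', rfl, horb⟩ g
    constructor
    · ext p
      rw [mem_gAct]
      rfl
    · ext π
      constructor
      · rintro ⟨σ, hσ, rfl⟩
        exact (horb σ hσ).1 ⟨g, rfl⟩
      · intro hπ
        refine ⟨gAct g⁻¹ π, (horb π hπ).1 ⟨g⁻¹, rfl⟩, ?_⟩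
        rw [gAct_gAct, mul_inv_cancel, gAct_one]
end
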